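/- arXiv:1210.2793 — 2 statements merged into one kernel-verified Lean document; each statement's English description precedes it below -/
import Mathlib

section
/- Let cl be a pregeometry closure operator on a set Ω that is trivial over a subset A, meaning that for every nonempty set S we have cl(A ∪ S) = ⋃_{s ∈ S} cl(A ∪ {s}). If d ∈ cl(A ∪ {a₁, …, aᵣ}) and aᵢ ∉ cl(A ∪ {d}) for every i = 1, …, r, then d ∈ cl(A). -/
theorem stmt_0 {Ω : Type*} (cl : Set Ω → Set Ω)
    (hsub : ∀ S : Set Ω, S ⊆ cl S)
    (hmono : ∀ S T : Set Ω, S ⊆ T → cl S ⊆ cl T)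
    (hidem : ∀ S : Set Ω, cl (cl S) = cl S)
    (hfin : ∀ (S : Set Ω) (x : Ω), x ∈ cl S → ∃ S₀ ⊆ S, S₀.Finite ∧ x ∈ cl S₀)
    (hexch : ∀ (S : Set Ω) (x y : Ω), x ∈ cl (S ∪ {y}) → x ∉ cl S → y ∈ cl (S ∪ {x}))
    (A : Set Ω)
    (htriv : ∀ S : Set Ω, S.Nonempty → cl (A ∪ S) = ⋃ s ∈ S, cl (A ∪ {s}))
    (r : ℕ) (a : Fin r → Ω) (d : Ω)
    (hd : d ∈ cl (A ∪ Set.range a))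
    (hna : ∀ i : Fin r, a i ∉ cl (A ∪ {d})) :
    d ∈ cl A := by
  rcases Nat.eq_zero_or_pos r with hr | hr
  · subst hr
    have : Set.range a = (∅ : Set Ω) := Set.range_eq_empty a
    rw [this, Set.union_empty] at hd
    exact hd
  · have hne : (Set.range a).Nonempty := Set.range_nonempty_iff_nonempty.mpr ⟨⟨0, hr⟩⟩
    rw [htriv _ hne] at hd
    rcases Set.mem_iUnion₂.mp hd with ⟨s, ⟨i, rfl⟩, hds⟩
    by_contra hdA
    have hdA' : d ∉ cl A := hdA
    exact hna i (hexch A d (a i) hds hdA')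
end

section
/- Let G be an abelian group in which the 2-torsion-type kernel {x ∈ G : 2x = 0} is finite, and let H be a subgroup of G × G such that both H ∩ (G × {0}) and H ∩ ({0} × G) are finite. Then for any fixed e, e' ∈ G, the set {(g, h) ∈ G × G : (g, h − e) ∈ H and (g, −h − e') ∈ H} is finite. -/
private lemma fiber_finite {G : Type*} [AddCommGroup G]
    (htor : {x : G | 2 • x = 0}.Finite) (a : G) : {g : G | 2 • g = a}.Finite := by
  rcases Set.eq_empty_or_nonempty {g : G | 2 • g = a} with h | ⟨g₀, hg₀⟩
  · simp [h]
  · have : {g : G | 2 • g = a} ⊆ (fun x => x + g₀) '' {x : G | 2 • x = 0} := by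
      intro g hg
      exact ⟨g - g₀, by simp only [Set.mem_setOf_eq] at *; rw [smul_sub, hg, hg₀]; abel,
        by simp⟩
    exact (htor.image _).subset this

theorem stmt_6 {G : Type*} [AddCommGroup G]
    (htor : {x : G | 2 • x = 0}.Finite)
    (H : AddSubgroup (G × G))
    (hfin1 : {p : G × G | p ∈ H ∧ p.2 = 0}.Finite)
    (hfin2 : {p : G × G | p ∈ H ∧ p.1 = 0}.Finite)
    (e e' : G) :
    {p : G × G | (p.1, p.2 - e) ∈ H ∧ (p.1, -p.2 - e') ∈ H}.Finite := by
  -- A : possible values of 2g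
  have hA : {x : G | (x, -e - e') ∈ H}.Finite := by
    rcases Set.eq_empty_or_nonempty {x : G | (x, -e - e') ∈ H} with h | ⟨a₀, ha₀⟩
    · simp [h]
    · have : {x : G | (x, -e - e') ∈ H} ⊆
          (fun p : G × G => p.1 + a₀) '' {p : G × G | p ∈ H ∧ p.2 = 0} := by
        intro x hx
        refine ⟨(x - a₀, 0), ⟨?_, rfl⟩, by simp⟩
        have := H.sub_mem hx ha₀
        simpa using this
      exact (hfin1.image _).subset this
  have hB : {y : G | (0, y) ∈ H}.Finite := by
    have : {y : G | (0, y) ∈ H} ⊆ Prod.snd '' {p : G × G | p ∈ H ∧ p.1 = 0} := by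
      intro y hy
      exact ⟨(0, y), ⟨hy, rfl⟩, rfl⟩
    exact (hfin2.image _).subset this
  have hSg : {g : G | 2 • g ∈ {x : G | (x, -e - e') ∈ H}}.Finite := by
    have : {g : G | 2 • g ∈ {x : G | (x, -e - e') ∈ H}} =
        ⋃ a ∈ {x : G | (x, -e - e') ∈ H}, {g : G | 2 • g = a} := by
      ext g; simp
    rw [this]
    exact hA.biUnion fun a _ => fiber_finite htor a
  have hSh : {h : G | 2 • h - e + e' ∈ {y : G | (0, y) ∈ H}}.Finite := by
    have : {h : G | 2 • h - e + e' ∈ {y : G | (0, y) ∈ H}} ⊆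
        ⋃ b ∈ {y : G | (0, y) ∈ H}, {h : G | 2 • h = b + e - e'} := by
      intro h hh
      simp only [Set.mem_iUnion]
      exact ⟨2 • h - e + e', hh, show 2 • h = 2 • h - e + e' + e - e' by abel⟩
    exact ((hB.biUnion fun b _ => fiber_finite htor _).subset this)
  have hsub : {p : G × G | (p.1, p.2 - e) ∈ H ∧ (p.1, -p.2 - e') ∈ H} ⊆
      {g : G | 2 • g ∈ {x : G | (x, -e - e') ∈ H}} ×ˢ
      {h : G | 2 • h - e + e' ∈ {y : G | (0, y) ∈ H}} := by
    rintro ⟨g, h⟩ ⟨h1, h2⟩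
    have hadd := H.add_mem h1 h2
    have hsub' := H.sub_mem h1 h2
    simp only [Prod.mk_add_mk, Prod.mk_sub_mk] at hadd hsub'
    constructor
    · have : (2 • g, -e - e') = (g + g, h - e + (-h - e')) := by
        refine Prod.ext ?_ ?_ <;> simp [two_smul] <;> abel
      simpa only [Set.mem_setOf_eq, this] using hadd
    · have : (0, 2 • h - e + e') = (g - g, h - e - (-h - e')) := by
        refine Prod.ext ?_ ?_ <;> simp [two_smul] <;> abel
      simpa only [Set.mem_setOf_eq, this] using hsub'
  exact (hSg.prod hSh).subset hsub
end
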